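/- (Characterization C1 of GLS.) A formula φ is a theorem of the Hilbert system GLS if and only if there is a finite set Σ of formulas such that for every GL-model ⟨W,R,V⟩ and every Σ-reflexive world w ∈ W, V(w, φ) = true. -/

import Mathlib

/-- Modal formulas: propositional variables, ⊥, →, □. -/
inductive Formula : Type
  | var : ℕ → Formula
  | bot : Formula
  | imp : Formula → Formula → Formula
  | box : Formula → Formula
deriving DecidableEq

/-- Levels of sequents in GLS_seq: first level (⇒) and second level (⇛). -/
inductive SeqLevel : Type
  | one
  | two
deriving DecidableEq

/-- The set of subformulas of a formula. -/
def Formula.subf : Formula → Finset Formula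
  | .var p => {.var p}
  | .bot => {.bot}
  | .imp φ ψ => insert (.imp φ ψ) (φ.subf ∪ ψ.subf)
  | .box φ => insert (.box φ) φ.subf

/-- SF(Ψ,Φ): all subformulas of formulas in Ψ ∪ Φ. -/
def SF (Ψ Φ : Finset Formula) : Finset Formula := (Ψ ∪ Φ).biUnion Formula.subf

def Formula.isBox : Formula → Bool
  | .box _ => true
  | _ => false

def Formula.unbox : Formula → Formula
  | .box φ => φ
  | φ => φ

/-- Θ_□ = {φ : □φ ∈ Θ}. -/
def boxInv (Θ : Finset Formula) : Finset Formula :=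
  (Θ.filter fun ψ => ψ.isBox).image Formula.unbox

/-- The sequent calculus GLS_seq, on sequents of two levels.  The Bool parameter
records whether the cut rule may be used: `GLSSeq true` is provability in GLS_seq,
`GLSSeq false` is cut-free provability.  The first-level fragment is exactly GL_seq. -/
inductive GLSSeq : Bool → SeqLevel → Finset Formula → Finset Formula → Prop
  | init (c lv φ) : GLSSeq c lv {φ} {φ}
  | initBot (c lv) : GLSSeq c lv {Formula.bot} ∅
  | cut {lv Γ Δ} (φ) : GLSSeq true lv Γ (insert φ Δ) → GLSSeq true lv (insert φ Γ) Δ →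
      GLSSeq true lv Γ Δ
  | weak {c lv Γ Δ Γ' Δ'} : Γ ⊆ Γ' → Δ ⊆ Δ' → GLSSeq c lv Γ Δ → GLSSeq c lv Γ' Δ'
  | impL {c lv Γ Δ φ ψ} : GLSSeq c lv Γ (insert φ Δ) → GLSSeq c lv (insert ψ Γ) Δ →
      GLSSeq c lv (insert (.imp φ ψ) Γ) Δ
  | impR {c lv Γ Δ φ ψ} : GLSSeq c lv (insert φ Γ) (insert ψ Δ) →
      GLSSeq c lv Γ (insert (.imp φ ψ) Δ)
  | boxGL {c Γ φ} : GLSSeq c .one (Γ ∪ Γ.image .box ∪ {.box φ}) {φ} →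
      GLSSeq c .one (Γ.image .box) {.box φ}
  | boxL {c Γ Δ} (φ) : GLSSeq c .two (insert φ Γ) Δ → GLSSeq c .two (insert (.box φ) Γ) Δ
  | lift {c Γ Δ} : GLSSeq c .one Γ Δ → GLSSeq c .two Γ Δ

/-- The sequent calculus GL_seq (on first-level sequents only). -/
inductive GLSeq : Bool → Finset Formula → Finset Formula → Prop
  | init (c φ) : GLSeq c {φ} {φ}
  | initBot (c) : GLSeq c {Formula.bot} ∅
  | cut {Γ Δ} (φ) : GLSeq true Γ (insert φ Δ) → GLSeq true (insert φ Γ) Δ → GLSeq true Γ Δ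
  | weak {c Γ Δ Γ' Δ'} : Γ ⊆ Γ' → Δ ⊆ Δ' → GLSeq c Γ Δ → GLSeq c Γ' Δ'
  | impL {c Γ Δ φ ψ} : GLSeq c Γ (insert φ Δ) → GLSeq c (insert ψ Γ) Δ →
      GLSeq c (insert (.imp φ ψ) Γ) Δ
  | impR {c Γ Δ φ ψ} : GLSeq c (insert φ Γ) (insert ψ Δ) → GLSeq c Γ (insert (.imp φ ψ) Δ)
  | boxGL {c Γ φ} : GLSeq c (Γ ∪ Γ.image .box ∪ {.box φ}) {φ} → GLSeq c (Γ.image .box) {.box φ}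

/-- Proof trees of GLS_seq (cut included). -/
inductive GLSTree : SeqLevel → Finset Formula → Finset Formula → Type
  | init (lv φ) : GLSTree lv {φ} {φ}
  | initBot (lv) : GLSTree lv {Formula.bot} ∅
  | cut {lv Γ Δ} (φ) : GLSTree lv Γ (insert φ Δ) → GLSTree lv (insert φ Γ) Δ → GLSTree lv Γ Δ
  | weak {lv Γ Δ} (Γ' Δ' : Finset Formula) : Γ ⊆ Γ' → Δ ⊆ Δ' → GLSTree lv Γ Δ → GLSTree lv Γ' Δ'
  | impL {lv Γ Δ} (φ ψ) : GLSTree lv Γ (insert φ Δ) → GLSTree lv (insert ψ Γ) Δ →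
      GLSTree lv (insert (.imp φ ψ) Γ) Δ
  | impR {lv Γ Δ} (φ ψ) : GLSTree lv (insert φ Γ) (insert ψ Δ) → GLSTree lv Γ (insert (.imp φ ψ) Δ)
  | boxGL (Γ φ) : GLSTree .one (Γ ∪ Γ.image .box ∪ {.box φ}) {φ} → GLSTree .one (Γ.image .box) {.box φ}
  | boxL {Γ Δ} (φ) : GLSTree .two (insert φ Γ) Δ → GLSTree .two (insert (.box φ) Γ) Δ
  | lift {Γ Δ} : GLSTree .one Γ Δ → GLSTree .two Γ Δ

/-- The set of principal formulas of all (□L) rules occurring in a proof tree. -/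
def GLSTree.principals : ∀ {lv Γ Δ}, GLSTree lv Γ Δ → Finset Formula
  | _, _, _, .init _ _ => ∅
  | _, _, _, .initBot _ => ∅
  | _, _, _, .cut _ t₁ t₂ => t₁.principals ∪ t₂.principals
  | _, _, _, .weak _ _ _ _ t => t.principals
  | _, _, _, .impL _ _ t₁ t₂ => t₁.principals ∪ t₂.principals
  | _, _, _, .impR _ _ t => t.principals
  | _, _, _, .boxGL _ _ t => t.principals
  | _, _, _, .boxL φ t => insert (Formula.box φ) t.principals
  | _, _, _, .lift t => t.principals

/-- A proof tree bundled with its level and conclusion. -/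
abbrev PGLSTree : Type :=
  (lv : SeqLevel) × (Γ : Finset Formula) × (Δ : Finset Formula) × GLSTree lv Γ Δ

/-- The set of subproofs of a proof tree (including the tree itself). -/
def GLSTree.subproofs {lv Γ Δ} (t : GLSTree lv Γ Δ) : Set PGLSTree :=
  insert ⟨lv, Γ, Δ, t⟩ <|
    match lv, Γ, Δ, t with
    | _, _, _, .init _ _ => ∅
    | _, _, _, .initBot _ => ∅
    | _, _, _, .cut _ t₁ t₂ => t₁.subproofs ∪ t₂.subproofs
    | _, _, _, .weak _ _ _ _ t₁ => t₁.subproofs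
    | _, _, _, .impL _ _ t₁ t₂ => t₁.subproofs ∪ t₂.subproofs
    | _, _, _, .impR _ _ t₁ => t₁.subproofs
    | _, _, _, .boxGL _ _ t₁ => t₁.subproofs
    | _, _, _, .boxL _ t₁ => t₁.subproofs
    | _, _, _, .lift t₁ => t₁.subproofs

/-- Kripke satisfaction over a frame `R` with atomic valuation `v`. -/
def KSat {W : Type} (R : W → W → Prop) (v : W → ℕ → Prop) : Formula → W → Prop
  | .var p, w => v w p
  | .bot, _ => False
  | .imp φ ψ, w => KSat R v φ w → KSat R v ψ w
  | .box φ, w => ∀ w', R w w' → KSat R v φ w'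

/-- A GL-model: a nonempty, transitive, converse well-founded Kripke model. -/
structure GLModel where
  World : Type
  ne : Nonempty World
  R : World → World → Prop
  trans : Transitive R
  cwf : ∀ f : ℕ → World, ¬ ∀ i, R (f i) (f (i + 1))
  val : World → ℕ → Prop

/-- Truth of a formula at a world of a GL-model. -/
def GLModel.sat (M : GLModel) (w : M.World) (φ : Formula) : Prop := KSat M.R M.val φ w

/-- Truth of a sequent Γ ▸ Δ at a world: some γ ∈ Γ is false or some δ ∈ Δ is true. -/
def GLModel.seqTrue (M : GLModel) (w : M.World) (Γ Δ : Finset Formula) : Prop :=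
  (∃ γ ∈ Γ, ¬ M.sat w γ) ∨ (∃ δ ∈ Δ, M.sat w δ)

/-- w is Σ-reflexive: □α → α is true at w for every □α ∈ Σ. -/
def GLModel.reflexiveFor (M : GLModel) (w : M.World) (S : Finset Formula) : Prop :=
  ∀ α : Formula, Formula.box α ∈ S → M.sat w ((Formula.box α).imp α)

/-- Saturation conditions (→L), (→R) for first-level sequents. -/
def Saturated1 (Γ Δ : Finset Formula) : Prop :=
  (∀ φ ψ : Formula, φ.imp ψ ∈ Γ → φ ∈ Δ ∨ ψ ∈ Γ) ∧
  (∀ φ ψ : Formula, φ.imp ψ ∈ Δ → φ ∈ Γ ∧ ψ ∈ Δ)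

/-- Saturation for second-level sequents: additionally (□L). -/
def Saturated2 (Γ Δ : Finset Formula) : Prop :=
  Saturated1 Γ Δ ∧ ∀ φ : Formula, Formula.box φ ∈ Γ → φ ∈ Γ

def Saturated : SeqLevel → Finset Formula → Finset Formula → Prop
  | .one => Saturated1
  | .two => Saturated2

/-- The Hilbert system GL. -/
inductive GLHilbert : Formula → Prop
  | ax1 (φ ψ : Formula) : GLHilbert (φ.imp (ψ.imp φ))
  | ax2 (φ ψ χ : Formula) :
      GLHilbert ((φ.imp (ψ.imp χ)).imp ((φ.imp ψ).imp (φ.imp χ)))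
  | ax3 (φ : Formula) : GLHilbert (((φ.imp .bot).imp .bot).imp φ)
  | axK (φ ψ : Formula) :
      GLHilbert ((Formula.box (φ.imp ψ)).imp ((Formula.box φ).imp (Formula.box ψ)))
  | axLob (φ : Formula) :
      GLHilbert ((Formula.box ((Formula.box φ).imp φ)).imp (Formula.box φ))
  | mp {φ ψ} : GLHilbert (φ.imp ψ) → GLHilbert φ → GLHilbert ψ
  | nec {φ} : GLHilbert φ → GLHilbert (Formula.box φ)

/-- The Hilbert system GLS: theorems of GL and all □α → α, closed under modus ponens. -/
inductive GLSHilbert : Formula → Prop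
  | gl {φ} : GLHilbert φ → GLSHilbert φ
  | refl (α : Formula) : GLSHilbert ((Formula.box α).imp α)
  | mp {φ ψ} : GLSHilbert (φ.imp ψ) → GLSHilbert φ → GLSHilbert ψ

/-- Conjunction (encoded with → and ⊥) of a list of formulas; empty conjunction is ⊤. -/
def Formula.conj : List Formula → Formula
  | [] => Formula.bot.imp Formula.bot
  | φ :: l => ((φ.imp ((Formula.conj l).imp .bot)).imp .bot)

/-- Membership predicate for the canonical model: saturated first-level sequents over S
that are not cut-free provable in GLS_seq. -/
def W0pred (S : Finset Formula) (s : Finset Formula × Finset Formula) : Prop :=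
  Saturated1 s.1 s.2 ∧ ¬ GLSSeq false SeqLevel.one s.1 s.2 ∧ s.1 ∪ s.2 ⊆ S

/-- Worlds of the canonical model. -/
def W0 (S : Finset Formula) : Type := {s : Finset Formula × Finset Formula // W0pred S s}

/-- Accessibility of the canonical model: (Γ⇒Δ) R₀ (Γ'⇒Δ') iff Γ_□ ⊊ Γ'_□ and Γ_□ ⊆ Γ'. -/
def R0 (S : Finset Formula) (s t : W0 S) : Prop :=
  boxInv s.1.1 ⊂ boxInv t.1.1 ∧ boxInv s.1.1 ⊆ t.1.1

/-- Valuation of the canonical model: p is true at (Γ⇒Δ) iff p ∈ Γ. -/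
def V0 (S : Finset Formula) (s : W0 S) (p : ℕ) : Prop := Formula.var p ∈ s.1.1

/-- The extended set of worlds W = W₀ ∪ ℕ. -/
def Wext (S : Finset Formula) : Type := W0 S ⊕ ℕ

/-- The extended accessibility relation, with distinguished world `wp` in W₀. -/
def Rext (S : Finset Formula) (wp : W0 S) : Wext S → Wext S → Prop
  | Sum.inl x, Sum.inl y => R0 S x y
  | Sum.inr _, Sum.inl y => y = wp ∨ R0 S wp y
  | Sum.inr n, Sum.inr m => m < n
  | Sum.inl _, Sum.inr _ => False

/-- The extended valuation: worlds in ℕ behave like the distinguished world `wp`. -/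
def Vext (S : Finset Formula) (wp : W0 S) : Wext S → ℕ → Prop
  | Sum.inl x, p => V0 S x p
  | Sum.inr _, p => V0 S wp p

/-! ### Auxiliary development -/

namespace C1Aux

def Formula.neg (φ : Formula) : Formula := φ.imp .bot

/-- Iterated implication. -/
def imps : List Formula → Formula → Formula
  | [], B => B
  | A :: L, B => A.imp (imps L B)

/-- Derivability from a set of hypotheses over GL. -/
inductive Deriv : Set Formula → Formula → Prop
  | ax {Γ φ} : GLHilbert φ → Deriv Γ φ
  | hyp {Γ φ} : φ ∈ Γ → Deriv Γ φ
  | mp {Γ φ ψ} : Deriv Γ (φ.imp ψ) → Deriv Γ φ → Deriv Γ ψ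

theorem GLid (φ : Formula) : GLHilbert (φ.imp φ) :=
  GLHilbert.mp (GLHilbert.mp (GLHilbert.ax2 φ (φ.imp φ) φ) (GLHilbert.ax1 φ (φ.imp φ)))
    (GLHilbert.ax1 φ φ)

theorem Deriv.weaken {Γ Γ' : Set Formula} {φ} (h : Γ ⊆ Γ') (d : Deriv Γ φ) : Deriv Γ' φ := by
  induction d with
  | ax h' => exact .ax h'
  | hyp h' => exact .hyp (h h')
  | mp _ _ ih1 ih2 => exact .mp ih1 ih2

theorem Deriv.deduction_aux {Γ : Set Formula} {ψ} (d : Deriv Γ ψ) :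
    ∀ (φ : Formula) (Δ : Set Formula), Γ ⊆ insert φ Δ → Deriv Δ (φ.imp ψ) := by
  induction d with
  | ax h' => exact fun φ Δ _ => .mp (.ax (GLHilbert.ax1 _ φ)) (.ax h')
  | hyp h' =>
    intro φ Δ hsub
    rcases hsub h' with h'' | h''
    · subst h''; exact .ax (GLid _)
    · exact .mp (.ax (GLHilbert.ax1 _ φ)) (.hyp h'')
  | mp _ _ ih1 ih2 =>
    intro φ Δ hsub
    exact .mp (.mp (.ax (GLHilbert.ax2 _ _ _)) (ih1 φ Δ hsub)) (ih2 φ Δ hsub)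

theorem Deriv.deduction {Γ : Set Formula} {φ ψ} (d : Deriv (insert φ Γ) ψ) :
    Deriv Γ (φ.imp ψ) := d.deduction_aux φ Γ (subset_refl _)

theorem Deriv.toGL {φ} (d : Deriv ∅ φ) : GLHilbert φ := by
  induction d with
  | ax h => exact h
  | hyp h => exact absurd h (Set.notMem_empty _)
  | mp _ _ ih1 ih2 => exact ih1.mp ih2

theorem Deriv.efq {Γ : Set Formula} {φ} (d : Deriv Γ .bot) : Deriv Γ φ :=
  .mp (.ax (GLHilbert.ax3 φ)) (.mp (.ax (GLHilbert.ax1 .bot (φ.imp .bot))) d)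

theorem Deriv.byContra {Γ : Set Formula} {φ} (d : Deriv (insert (Formula.neg φ) Γ) .bot) :
    Deriv Γ φ :=
  .mp (.ax (GLHilbert.ax3 φ)) d.deduction

theorem deriv_imps {Γ : Set Formula} {L B} (h : Deriv Γ (imps L B))
    (hL : ∀ a ∈ L, Deriv Γ a) : Deriv Γ B := by
  induction L with
  | nil => exact h
  | cons a L ih =>
    exact ih (.mp h (hL a (List.mem_cons_self (a := a) (l := L)))) (fun b hb => hL b (List.mem_cons_of_mem _ hb))

theorem imps_of_deriv : ∀ (n : ℕ) (s : Finset Formula) (B : Formula), s.card ≤ n →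
    Deriv ↑s B → ∃ L : List Formula, (∀ a ∈ L, a ∈ s) ∧ GLHilbert (imps L B) := by
  intro n
  induction n with
  | zero =>
    intro s B hc hd
    have : s = ∅ := Finset.card_eq_zero.mp (Nat.le_zero.mp hc)
    subst this
    refine ⟨[], by simp, ?_⟩
    simpa [imps] using (hd.weaken (by simp)).toGL
  | succ n ih =>
    intro s B hc hd
    rcases s.eq_empty_or_nonempty with rfl | ⟨a, ha⟩
    · refine ⟨[], by simp, ?_⟩
      simpa [imps] using (hd.weaken (by simp)).toGL
    · have hins : (s : Set Formula) = insert a ↑(s.erase a) := by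
        rw [← Finset.coe_insert, Finset.insert_erase ha]
      rw [hins] at hd
      have hcard : (s.erase a).card ≤ n := by
        have := Finset.card_erase_of_mem ha
        omega
      obtain ⟨L, hL, hgl⟩ := ih (s.erase a) (a.imp B) hcard hd.deduction
      refine ⟨L ++ [a], ?_, ?_⟩
      · intro b hb
        rcases List.mem_append.mp hb with hb | hb
        · exact Finset.mem_of_mem_erase (hL b hb)
        · simpa using (List.mem_singleton.mp hb ▸ ha)
      · have key : ∀ (L : List Formula), imps (L ++ [a]) B = imps L (a.imp B) := by
          intro L; induction L with
          | nil => rfl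
          | cons c L ih => simp [imps, ih]
        rw [key]; exact hgl

theorem glK {a b : Formula} (h : GLHilbert ((a.imp b).box)) :
    GLHilbert ((Formula.box a).imp (Formula.box b)) :=
  (GLHilbert.axK a b).mp h

theorem box_imps {L : List Formula} {B : Formula} :
    GLHilbert ((Formula.box (imps L B)).imp (imps (L.map .box) (.box B))) := by
  induction L with
  | nil => exact GLid _
  | cons a L ih =>
    -- goal: □(a → imps L B) → (□a → imps □L □B)
    refine Deriv.toGL ?_
    refine Deriv.deduction ?_
    refine Deriv.deduction ?_
    -- context: {□(a→imps L B), □a} ⊢ imps □L □B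
    refine .mp (.ax ih) (.mp (.mp (.ax (GLHilbert.axK a (imps L B))) (.hyp ?_)) (.hyp ?_))
    · right; left; rfl
    · left; rfl

theorem deriv_imps_mono {L : List Formula} {B C : Formula} : ∀ {Γ : Set Formula},
    Deriv Γ (imps L B) → Deriv Γ (B.imp C) → Deriv Γ (imps L C) := by
  induction L with
  | nil => exact fun d h => .mp h d
  | cons a L ih =>
    intro Γ d h
    refine Deriv.deduction ?_
    exact ih (.mp (d.weaken (Set.subset_insert _ _)) (.hyp (Set.mem_insert _ _)))
      (h.weaken (Set.subset_insert _ _))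

theorem imps_mono {L : List Formula} {B C : Formula} (h : GLHilbert (B.imp C))
    (h2 : GLHilbert (imps L B)) : GLHilbert (imps L C) :=
  Deriv.toGL (deriv_imps_mono (.ax h2) (.ax h))


theorem box_imps_gl {L : List Formula} {B : Formula} (h : GLHilbert (imps L B)) :
    GLHilbert (imps (L.map .box) (.box B)) :=
  box_imps.mp h.nec

/-- σ φ encodes φ ∧ □φ. -/
def sig (φ : Formula) : Formula := (φ.imp ((Formula.box φ).imp .bot)).imp .bot

theorem sig_fst {φ : Formula} : GLHilbert ((sig φ).imp φ) := by
  refine Deriv.toGL (Deriv.deduction (Deriv.byContra ?_))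
  refine .mp (.hyp (show sig φ ∈ _ by simp)) ?_
  refine Deriv.deduction (Deriv.efq (Deriv.mp (φ := φ) (ψ := Formula.bot) (.hyp ?_) (.hyp ?_)))
  · show φ.imp Formula.bot ∈ _; simp [Formula.neg]
  · show φ ∈ _; simp

theorem sig_snd {φ : Formula} : GLHilbert ((sig φ).imp (Formula.box φ)) := by
  refine Deriv.toGL (Deriv.deduction (Deriv.byContra ?_))
  refine .mp (.hyp (show sig φ ∈ _ by simp)) (Deriv.deduction ?_)
  exact .hyp (show Formula.neg (Formula.box φ) ∈ _ by simp)

theorem phi_boxsig {φ : Formula} :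
    GLHilbert (φ.imp ((Formula.box (sig φ)).imp (sig φ))) := by
  refine Deriv.toGL (Deriv.deduction (Deriv.deduction (Deriv.deduction ?_)))
  -- context: {φ → ¬□φ, □σ, φ} ⊢ ⊥
  have hbφ : Deriv (insert ((φ.imp ((Formula.box φ).imp .bot)))
      (insert (Formula.box (sig φ)) (insert φ (∅ : Set Formula)))) (Formula.box φ) :=
    .mp (.ax (glK (GLHilbert.nec sig_fst))) (.hyp (show Formula.box (sig φ) ∈ _ by simp))
  exact .mp (.mp (.hyp (Or.inl rfl)) (.hyp (show φ ∈ _ by simp))) hbφ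

theorem gl4 {φ : Formula} : GLHilbert ((Formula.box φ).imp (Formula.box (Formula.box φ))) := by
  refine Deriv.toGL (Deriv.deduction ?_)
  have d1 : Deriv (insert (Formula.box φ) (∅ : Set Formula))
      (Formula.box ((Formula.box (sig φ)).imp (sig φ))) :=
    .mp (.ax (glK (GLHilbert.nec phi_boxsig))) (.hyp (Or.inl rfl))
  have d2 := Deriv.mp (.ax (GLHilbert.axLob (sig φ))) d1
  exact .mp (.ax (glK (GLHilbert.nec sig_snd))) d2

/-! ### Canonical model -/

def MCS (Φ m : Finset Formula) : Prop :=
  m ⊆ Φ ∧ ¬ Deriv ↑m .bot ∧ ∀ χ ∈ Φ, χ ∈ m ∨ Deriv ↑m (χ.imp .bot)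

theorem mcs_closed {Φ m : Finset Formula} (h : MCS Φ m) {χ : Formula} (hχ : χ ∈ Φ)
    (hd : Deriv ↑m χ) : χ ∈ m := by
  rcases h.2.2 χ hχ with h' | h'
  · exact h'
  · exact absurd (h'.mp hd) h.2.1

theorem lindenbaum (Φ : Finset Formula) :
    ∀ (n : ℕ) (w : Finset Formula), (Φ \ w).card ≤ n → w ⊆ Φ → ¬ Deriv ↑w .bot →
    ∃ m, w ⊆ m ∧ MCS Φ m := by
  intro n
  induction n with
  | zero =>
    intro w hc hw hcon
    refine ⟨w, subset_refl _, hw, hcon, ?_⟩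
    intro χ hχ
    left
    by_contra h
    have h2 : χ ∈ Φ \ w := Finset.mem_sdiff.mpr ⟨hχ, h⟩
    have := Finset.card_pos.mpr ⟨χ, h2⟩
    omega
  | succ n ih =>
    intro w hc hw hcon
    by_cases h : ∃ χ ∈ Φ, χ ∉ w ∧ ¬ Deriv ↑(insert χ w) .bot
    · obtain ⟨χ, hχΦ, hχw, hχcon⟩ := h
      have hmemd : χ ∈ Φ \ w := Finset.mem_sdiff.mpr ⟨hχΦ, hχw⟩
      have hcard : (Φ \ insert χ w).card ≤ n := by
        rw [Finset.sdiff_insert]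
        have := Finset.card_erase_of_mem hmemd
        omega
      obtain ⟨m, hsm, hm⟩ := ih (insert χ w) hcard (Finset.insert_subset hχΦ hw) hχcon
      exact ⟨m, (Finset.subset_insert _ _).trans hsm, hm⟩
    · push_neg at h
      refine ⟨w, subset_refl _, hw, hcon, ?_⟩
      intro χ hχ
      by_cases hmem : χ ∈ w
      · exact Or.inl hmem
      · right
        have hd := h χ hχ hmem
        rw [Finset.coe_insert] at hd
        exact hd.deduction

def CW (Φ : Finset Formula) : Type := {m : Finset Formula // MCS Φ m}

def CR (Φ : Finset Formula) (x y : CW Φ) : Prop :=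
  (∀ ξ : Formula, Formula.box ξ ∈ x.1 → ξ ∈ y.1 ∧ Formula.box ξ ∈ y.1) ∧
  ∃ ξ : Formula, Formula.box ξ ∈ y.1 ∧ Formula.box ξ ∉ x.1

def CV (Φ : Finset Formula) (x : CW Φ) (p : ℕ) : Prop := Formula.var p ∈ x.1

theorem CR_trans (Φ : Finset Formula) : Transitive (CR Φ) := by
  intro x y z hxy hyz
  constructor
  · intro ξ hξ
    exact hyz.1 ξ (hxy.1 ξ hξ).2
  · obtain ⟨ξ, hy, hx⟩ := hxy.2
    exact ⟨ξ, (hyz.1 ξ hy).2, hx⟩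

theorem CR_cwf (Φ : Finset Formula) : ∀ f : ℕ → CW Φ, ¬ ∀ i, CR Φ (f i) (f (i + 1)) := by
  intro f hf
  set g : ℕ → ℕ := fun i => ((f i).1.filter (fun b => b.isBox)).card with hg
  have hmono : StrictMono g := by
    apply strictMono_nat_of_lt_succ
    intro i
    apply Finset.card_lt_card
    constructor
    · intro b hb
      obtain ⟨hbm, hbox⟩ := Finset.mem_filter.mp hb
      obtain ⟨η, rfl⟩ : ∃ η, b = Formula.box η := by
        cases b <;> simp [Formula.isBox] at hbox ⊢
      exact Finset.mem_filter.mpr ⟨((hf i).1 η hbm).2, rfl⟩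
    · intro hsub
      obtain ⟨ξ, hy, hx⟩ := (hf i).2
      exact hx (Finset.mem_filter.mp (hsub (Finset.mem_filter.mpr ⟨hy, rfl⟩))).1
  have h1 : g (Φ.card + 1) ≤ Φ.card :=
    Finset.card_le_card ((Finset.filter_subset _ _).trans (f (Φ.card + 1)).2.1)
  have h2 : Φ.card + 1 ≤ g (Φ.card + 1) := hmono.le_apply
  omega

/-- Closure of Φ₀ under single negations. -/
def cl (Φ₀ : Finset Formula) : Finset Formula := Φ₀ ∪ Φ₀.image Formula.neg

theorem subf_self (φ : Formula) : φ ∈ φ.subf := by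
  cases φ <;> simp [Formula.subf]

theorem subf_trans {φ ψ : Formula} (h : ψ ∈ φ.subf) : ψ.subf ⊆ φ.subf := by
  induction φ with
  | var p => simp [Formula.subf] at h; subst h; exact subset_refl _
  | bot => simp [Formula.subf] at h; subst h; exact subset_refl _
  | imp a b iha ihb =>
    simp only [Formula.subf, Finset.mem_insert, Finset.mem_union] at h
    rcases h with h | h | h
    · subst h; exact subset_refl _
    · exact (iha h).trans (by intro x hx; simp [Formula.subf]; right; left; exact hx)
    · exact (ihb h).trans (by intro x hx; simp [Formula.subf]; right; right; exact hx)
  | box a iha =>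
    simp only [Formula.subf, Finset.mem_insert] at h
    rcases h with h | h
    · subst h; exact subset_refl _
    · exact (iha h).trans (by intro x hx; simp [Formula.subf]; right; exact hx)

theorem box_mem_cl {Φ₀ : Finset Formula} {ξ : Formula} (h : Formula.box ξ ∈ cl Φ₀) :
    Formula.box ξ ∈ Φ₀ := by
  rcases Finset.mem_union.mp h with h | h
  · exact h
  · obtain ⟨χ, _, he⟩ := Finset.mem_image.mp h
    exact absurd he (by simp [Formula.neg])

theorem truth_lemma (Φ₀ : Finset Formula) (SC : ∀ χ ∈ Φ₀, χ.subf ⊆ Φ₀) :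
    ∀ (χ : Formula), χ ∈ Φ₀ → ∀ (x : CW (cl Φ₀)),
      (χ ∈ x.1 ↔ KSat (CR (cl Φ₀)) (CV (cl Φ₀)) χ x) := by
  intro χ
  induction χ with
  | var p => intro _ x; exact Iff.rfl
  | bot =>
    intro _ x
    simp only [KSat, iff_false]
    intro h
    exact x.2.2.1 (.hyp (Finset.mem_coe.mpr h))
  | imp a b iha ihb =>
    intro hmem x
    have haΦ : a ∈ Φ₀ := SC _ hmem (by simp [Formula.subf]; right; left; exact subf_self a)
    have hbΦ : b ∈ Φ₀ := SC _ hmem (by simp [Formula.subf]; right; right; exact subf_self b)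
    constructor
    · intro h hsa
      have ha : a ∈ x.1 := (iha haΦ x).mpr hsa
      have hd : Deriv ↑x.1 b := .mp (.hyp (Finset.mem_coe.mpr h)) (.hyp (Finset.mem_coe.mpr ha))
      exact (ihb hbΦ x).mp (mcs_closed x.2 (Finset.mem_union_left _ hbΦ) hd)
    · intro h
      show Formula.imp a b ∈ x.1
      by_cases ha : a ∈ x.1
      · have hb : b ∈ x.1 := (ihb hbΦ x).mpr (h ((iha haΦ x).mp ha))
        exact mcs_closed x.2 (Finset.mem_union_left _ hmem)
          (.mp (.ax (GLHilbert.ax1 b a)) (.hyp (Finset.mem_coe.mpr hb)))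
      · rcases x.2.2.2 a (Finset.mem_union_left _ haΦ) with h' | h'
        · exact absurd h' ha
        · refine mcs_closed x.2 (Finset.mem_union_left _ hmem) ?_
          refine Deriv.deduction (Deriv.efq ?_)
          exact .mp (h'.weaken (Set.subset_insert _ _)) (.hyp (Set.mem_insert _ _))
  | box ξ ihξ =>
    intro hmem x
    have hξΦ : ξ ∈ Φ₀ := SC _ hmem (by simp [Formula.subf]; right; exact subf_self ξ)
    constructor
    · intro h y hxy
      exact (ihξ hξΦ y).mp ((hxy.1 ξ h).1)
    · intro h
      by_contra hbox
      set B : Finset Formula := x.1.filter (fun b => b.isBox) with hB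
      set D : Finset Formula := B ∪ B.image Formula.unbox with hD
      set seed : Finset Formula := insert (Formula.neg ξ) (insert (Formula.box ξ) D) with hseed
      have hBbox : ∀ b ∈ B, ∃ η, b = Formula.box η ∧ Formula.box η ∈ x.1 := by
        intro b hb
        obtain ⟨hbm, hbx⟩ := Finset.mem_filter.mp hb
        cases b <;> simp [Formula.isBox] at hbx
        exact ⟨_, rfl, hbm⟩
      have hDsub : D ⊆ cl Φ₀ := by
        intro d hd
        rcases Finset.mem_union.mp hd with hd | hd
        · exact x.2.1 (Finset.mem_filter.mp hd).1
        · obtain ⟨b, hb, rfl⟩ := Finset.mem_image.mp hd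
          obtain ⟨η, rfl, hηx⟩ := hBbox b hb
          have : Formula.box η ∈ Φ₀ := box_mem_cl (x.2.1 hηx)
          refine Finset.mem_union_left _ (SC _ this ?_)
          simp [Formula.subf, Formula.unbox]
          right; exact subf_self η
      have hseedsub : seed ⊆ cl Φ₀ := by
        intro d hd
        rcases Finset.mem_insert.mp hd with rfl | hd
        · exact Finset.mem_union_right _ (Finset.mem_image.mpr ⟨ξ, hξΦ, rfl⟩)
        · rcases Finset.mem_insert.mp hd with rfl | hd
          · exact Finset.mem_union_left _ hmem
          · exact hDsub hd
      by_cases hcon : Deriv ↑seed .bot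
      · -- inconsistent seed: derive □ξ ∈ x
        rw [hseed, Finset.coe_insert, Finset.coe_insert] at hcon
        have d2 : Deriv (insert (Formula.box ξ) ↑D) ξ := by
          refine .mp (.ax (GLHilbert.ax3 ξ)) ?_
          exact hcon.deduction_aux (Formula.neg ξ) _ (subset_refl _)
        have d3 : Deriv ↑D ((Formula.box ξ).imp ξ) := d2.deduction
        obtain ⟨L, hLD, hgl⟩ := imps_of_deriv D.card D _ le_rfl d3
        have hgl3 : GLHilbert (imps (L.map .box) (Formula.box ξ)) :=
          imps_mono (GLHilbert.axLob ξ) (box_imps_gl hgl)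
        have dctx : ∀ a ∈ L.map Formula.box, Deriv ↑x.1 a := by
          intro a ha
          obtain ⟨d, hdL, rfl⟩ := List.mem_map.mp ha
          rcases Finset.mem_union.mp (hLD d hdL) with hd | hd
          · obtain ⟨η, rfl, hηx⟩ := hBbox d hd
            exact .mp (.ax gl4) (.hyp (Finset.mem_coe.mpr hηx))
          · obtain ⟨b, hb, rfl⟩ := Finset.mem_image.mp hd
            obtain ⟨η, rfl, hηx⟩ := hBbox b hb
            exact .hyp (Finset.mem_coe.mpr hηx)
        have hfin : Deriv ↑x.1 (Formula.box ξ) := deriv_imps (.ax hgl3) dctx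
        exact hbox (mcs_closed x.2 (Finset.mem_union_left _ hmem) hfin)
      · obtain ⟨m, hsm, hm⟩ := lindenbaum (cl Φ₀) _ seed le_rfl hseedsub hcon
        set y : CW (cl Φ₀) := ⟨m, hm⟩ with hy
        have hDseed : D ⊆ seed := by
          intro d hd; exact Finset.mem_insert_of_mem (Finset.mem_insert_of_mem hd)
        have hxy : CR (cl Φ₀) x y := by
          constructor
          · intro η hη
            have hηB : Formula.box η ∈ B := Finset.mem_filter.mpr ⟨hη, rfl⟩
            have h1 : Formula.box η ∈ D := Finset.mem_union_left _ hηB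
            have h2 : η ∈ D := Finset.mem_union_right _
              (Finset.mem_image.mpr ⟨Formula.box η, hηB, rfl⟩)
            exact ⟨hsm (hDseed h2), hsm (hDseed h1)⟩
          · exact ⟨ξ, hsm (Finset.mem_insert_of_mem (Finset.mem_insert_self _ _)), hbox⟩
        have hξm : ξ ∈ m := (ihξ hξΦ y).mpr (h y hxy)
        have hneg : Formula.neg ξ ∈ m := hsm (Finset.mem_insert_self _ _)
        exact hm.2.1 (.mp (.hyp (Finset.mem_coe.mpr hneg)) (.hyp (Finset.mem_coe.mpr hξm)))

theorem gl_complete {ψ : Formula} (h : ¬ GLHilbert ψ) :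
    ∃ (M : GLModel) (w : M.World), ¬ M.sat w ψ := by
  set Φ₀ := ψ.subf with hΦ₀
  have SC : ∀ χ ∈ Φ₀, χ.subf ⊆ Φ₀ := fun χ hχ => subf_trans hχ
  have hcon : ¬ Deriv ↑({Formula.neg ψ} : Finset Formula) .bot := by
    intro hd
    have hd2 : Deriv (∅ : Set Formula) ((Formula.neg ψ).imp .bot) :=
      hd.deduction_aux _ ∅ (by simp)
    exact h (Deriv.toGL (.mp (.ax (GLHilbert.ax3 ψ)) hd2))
  have hsub : ({Formula.neg ψ} : Finset Formula) ⊆ cl Φ₀ := by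
    intro d hd
    rw [Finset.mem_singleton.mp hd]
    exact Finset.mem_union_right _ (Finset.mem_image.mpr ⟨ψ, subf_self ψ, rfl⟩)
  obtain ⟨m, hsm, hm⟩ := lindenbaum (cl Φ₀) _ _ le_rfl hsub hcon
  refine ⟨⟨CW (cl Φ₀), ⟨⟨m, hm⟩⟩, CR (cl Φ₀), CR_trans _, CR_cwf _, CV (cl Φ₀)⟩, ⟨m, hm⟩, ?_⟩
  intro hsat
  have hψm : ψ ∈ m := (truth_lemma Φ₀ SC ψ (subf_self ψ) ⟨m, hm⟩).mpr hsat
  have hneg : Formula.neg ψ ∈ m := hsm (Finset.mem_singleton_self _)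
  exact hm.2.1 (.mp (.hyp (Finset.mem_coe.mpr hneg)) (.hyp (Finset.mem_coe.mpr hψm)))


/-! ### Soundness -/

theorem gl_sound {φ : Formula} (h : GLHilbert φ) (M : GLModel) (w : M.World) : M.sat w φ := by
  induction h generalizing w with
  | ax1 a b => exact fun h1 _ => h1
  | ax2 a b c => exact fun h1 h2 h3 => h1 h3 (h2 h3)
  | ax3 a =>
    intro h1
    by_contra hc
    exact h1 hc
  | axK a b => exact fun h1 h2 w' hw' => h1 w' hw' (h2 w' hw')
  | axLob a =>
    intro h1
    by_contra hc
    simp only [GLModel.sat, KSat, not_forall] at hc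
    obtain ⟨w0, hww0, hw0⟩ := hc
    have hstep : ∀ x : {x : M.World // M.R w x ∧ ¬ KSat M.R M.val a x},
        ∃ y : {x : M.World // M.R w x ∧ ¬ KSat M.R M.val a x}, M.R x.1 y.1 := by
      rintro ⟨x, hwx, hxa⟩
      have hx : ¬ KSat M.R M.val (Formula.box a) x := fun hb => hxa (h1 x hwx hb)
      simp only [KSat, not_forall] at hx
      obtain ⟨y, hxy, hya⟩ := hx
      exact ⟨⟨y, M.trans hwx hxy, hya⟩, hxy⟩
    let g := fun x => (hstep x).choose
    let f : ℕ → M.World := fun n => (g^[n] ⟨w0, hww0, hw0⟩).1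
    refine M.cwf f ?_
    intro i
    show M.R (g^[i] _).1 (g^[i+1] _).1
    rw [Function.iterate_succ_apply']
    exact (hstep _).choose_spec
  | mp _ _ ih1 ih2 => exact ih1 w (ih2 w)
  | nec _ ih => exact fun w' _ => ih w'

theorem gls_imps {L : List Formula} {φ : Formula} (h : GLHilbert (imps L φ))
    (hr : ∀ r ∈ L, GLSHilbert r) : GLSHilbert φ := by
  have : ∀ (L' : List Formula) (ψ : Formula), GLSHilbert (imps L' ψ) →
      (∀ r ∈ L', GLSHilbert r) → GLSHilbert ψ := by
    intro L'
    induction L' with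
    | nil => exact fun ψ h _ => h
    | cons a L' ih =>
      intro ψ h hr
      exact ih ψ (h.mp (hr a (List.mem_cons_self (a := a) (l := L'))))
        (fun r hrm => hr r (List.mem_cons_of_mem _ hrm))
  exact this L φ (.gl h) hr

theorem nsat_imps {W : Type} {R : W → W → Prop} {v : W → ℕ → Prop} {L : List Formula}
    {B : Formula} {w : W} (h : ¬ KSat R v (imps L B) w) :
    (∀ r ∈ L, KSat R v r w) ∧ ¬ KSat R v B w := by
  induction L with
  | nil => exact ⟨by simp, h⟩
  | cons a L ih =>
    have ha : KSat R v a w := by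
      by_contra hna
      exact h (fun hA => absurd hA hna)
    have hrest : ¬ KSat R v (imps L B) w := fun hr => h (fun _ => hr)
    obtain ⟨h1, h2⟩ := ih hrest
    refine ⟨?_, h2⟩
    intro r hrm
    rcases List.mem_cons.mp hrm with rfl | hrm
    · exact ha
    · exact h1 r hrm

end C1Aux

/-- Characterization C1: φ is a theorem of GLS iff there is a finite set Σ of formulas
such that φ is true at every Σ-reflexive world of every GL-model. -/
theorem gls_characterization_c1 (φ : Formula) :
    GLSHilbert φ ↔
      ∃ S : Finset Formula, ∀ (M : GLModel) (w : M.World),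
        M.reflexiveFor w S → M.sat w φ := by
  constructor
  · intro h
    induction h with
    | gl h => exact ⟨∅, fun M w _ => C1Aux.gl_sound h M w⟩
    | refl α => exact ⟨{Formula.box α}, fun M w hr => hr α (Finset.mem_singleton_self _)⟩
    | mp _ _ ih1 ih2 =>
      obtain ⟨S1, h1⟩ := ih1
      obtain ⟨S2, h2⟩ := ih2
      refine ⟨S1 ∪ S2, fun M w hr => ?_⟩
      have hr1 : M.reflexiveFor w S1 := fun α hα => hr α (Finset.mem_union_left _ hα)
      have hr2 : M.reflexiveFor w S2 := fun α hα => hr α (Finset.mem_union_right _ hα)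
      exact h1 M w hr1 (h2 M w hr2)
  · rintro ⟨S, hS⟩
    set L : List Formula := S.toList.filterMap (fun χ => match χ with
      | .box α => some ((Formula.box α).imp α)
      | _ => none) with hL
    have hLform : ∀ r ∈ L, GLSHilbert r := by
      intro r hr
      rw [hL] at hr
      obtain ⟨χ, _, he⟩ := List.mem_filterMap.mp hr
      cases χ <;> simp at he
      rw [← he]
      exact GLSHilbert.refl _
    have hmemL : ∀ α : Formula, Formula.box α ∈ S → ((Formula.box α).imp α) ∈ L := by
      intro α hα
      rw [hL]
      exact List.mem_filterMap.mpr ⟨Formula.box α, Finset.mem_toList.mpr hα, rfl⟩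
    by_cases hgl : GLHilbert (C1Aux.imps L φ)
    · exact C1Aux.gls_imps hgl hLform
    · exfalso
      obtain ⟨M, w, hw⟩ := C1Aux.gl_complete hgl
      have hni := C1Aux.nsat_imps (R := M.R) (v := M.val) (w := w) hw
      refine hni.2 (hS M w ?_)
      intro α hα
      exact hni.1 _ (hmemL α hα)
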